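/- arXiv:2407.06607 — 2 statements merged into one kernel-verified Lean document; each statement's English description precedes it below -/
import Mathlib

section
/- Let 0 < θ₂ < θ₁ < π/2, r₂ > 0, λ > 0, h_min > 0, Δh_max > 0, Δφ > 0, 0 < z_min ≤ z_max, and set b⊥ = r₂·sin(θ₁ − θ₂) > 0. Assume b_min ≤ b⊥. For a master UAV with altitude z₁ > 0 placed at x₁ = x_t − z₁·tan θ₁ (so that r₁ = z₁/cos θ₁), the conjunction of the constraints z_min ≤ z₁ ≤ z_max (C1), r₂ ≤ r₁ (C3), b ≥ b_min (C5), h_amb ≥ h_min (C8), and Δh_worst ≤ Δh_max (C9) holds if and only if max{ z_min, r₂·cos θ₁, cos θ₁·b⊥·h_min/(λ·sin θ₁) } ≤ z₁ ≤ min{ z_max, 2π·cos θ₁·b⊥·Δh_max/(λ·sin θ₁·Δφ) }. -/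
open Real

/-- For the master UAV placed under constraint C2 (so r₁ = z₁/cos θ₁),
and when b_min ≤ b⊥, the conjunction of constraints C1, C3, C5, C8, C9 is
equivalent to an interval condition on the master altitude z₁. -/
theorem master_altitude_interval_characterization
    (θ₁ θ₂ r₂ lam h_min Δh_max Δφ z_min z_max b_min z₁ : ℝ)
    (hθ₂ : 0 < θ₂) (hθ : θ₂ < θ₁) (hθ₁ : θ₁ < π / 2)
    (hr₂ : 0 < r₂) (hlam : 0 < lam) (hhmin : 0 < h_min)
    (hΔh : 0 < Δh_max) (hΔφ : 0 < Δφ)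
    (hzmin : 0 < z_min) (hzminmax : z_min ≤ z_max)
    (hz₁ : 0 < z₁)
    (bperp : ℝ) (hbperp : bperp = r₂ * Real.sin (θ₁ - θ₂))
    (hbmin : b_min ≤ bperp)
    (r₁ : ℝ) (hr₁ : r₁ = z₁ / Real.cos θ₁)
    (b : ℝ) (hb : b = Real.sqrt ((r₁ - r₂ * Real.cos (θ₁ - θ₂)) ^ 2 + bperp ^ 2))
    (h_amb : ℝ) (hamb : h_amb = lam * r₁ * Real.sin θ₁ / bperp)
    (Δh_worst : ℝ) (hworst : Δh_worst = h_amb * Δφ / (2 * π)) :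
    (z_min ≤ z₁ ∧ z₁ ≤ z_max ∧ r₂ ≤ r₁ ∧ b_min ≤ b ∧
       h_min ≤ h_amb ∧ Δh_worst ≤ Δh_max) ↔
    (max (max z_min (r₂ * Real.cos θ₁))
        (Real.cos θ₁ * bperp * h_min / (lam * Real.sin θ₁)) ≤ z₁ ∧
     z₁ ≤ min z_max
        (2 * π * Real.cos θ₁ * bperp * Δh_max / (lam * Real.sin θ₁ * Δφ))) := by

  have hπ : (0:ℝ) < π := Real.pi_pos
  have hc : 0 < Real.cos θ₁ := Real.cos_pos_of_mem_Ioo ⟨by linarith, hθ₁⟩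
  have hs : 0 < Real.sin θ₁ := Real.sin_pos_of_pos_of_lt_pi (by linarith) (by linarith)
  have hp : 0 < bperp := by
    rw [hbperp]
    exact mul_pos hr₂ (Real.sin_pos_of_pos_of_lt_pi (by linarith) (by linarith))
  have hls : 0 < lam * Real.sin θ₁ := mul_pos hlam hs
  -- C5 always holds
  have hC5 : b_min ≤ b := by
    rw [hb]
    have h1 : bperp = Real.sqrt (bperp ^ 2) := (Real.sqrt_sq hp.le).symm
    calc b_min ≤ bperp := hbmin
      _ = Real.sqrt (bperp ^ 2) := h1
      _ ≤ Real.sqrt ((r₁ - r₂ * Real.cos (θ₁ - θ₂)) ^ 2 + bperp ^ 2) := by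
          apply Real.sqrt_le_sqrt; nlinarith [sq_nonneg (r₁ - r₂ * Real.cos (θ₁ - θ₂))]
  -- C3
  have key3 : (r₂ ≤ r₁) ↔ (r₂ * Real.cos θ₁ ≤ z₁) := by
    rw [hr₁, le_div_iff₀ hc]
  -- C8
  have key8 : (h_min ≤ h_amb) ↔
      (Real.cos θ₁ * bperp * h_min / (lam * Real.sin θ₁) ≤ z₁) := by
    rw [hamb, hr₁, le_div_iff₀ hp,
      show lam * (z₁ / Real.cos θ₁) * Real.sin θ₁
        = z₁ * (lam * Real.sin θ₁) / Real.cos θ₁ from by ring,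
      le_div_iff₀ hc, div_le_iff₀ hls]
    constructor <;> intro h <;> nlinarith [h]
  -- C9
  have key9 : (Δh_worst ≤ Δh_max) ↔
      (z₁ ≤ 2 * π * Real.cos θ₁ * bperp * Δh_max / (lam * Real.sin θ₁ * Δφ)) := by
    have hlsd : 0 < lam * Real.sin θ₁ * Δφ := mul_pos hls hΔφ
    have hcp2 : 0 < Real.cos θ₁ * bperp * (2 * π) := by positivity
    rw [hworst, hamb, hr₁,
      show lam * (z₁ / Real.cos θ₁) * Real.sin θ₁ / bperp * Δφ / (2 * π)
        = z₁ * (lam * Real.sin θ₁ * Δφ) / (Real.cos θ₁ * bperp * (2 * π)) from by ring,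
      div_le_iff₀ hcp2, le_div_iff₀ hlsd]
    constructor <;> intro h <;> nlinarith [h]
  simp only [max_le_iff, le_min_iff]
  constructor
  · rintro ⟨h1, h2, h3, _, h5, h6⟩
    exact ⟨⟨⟨h1, key3.mp h3⟩, key8.mp h5⟩, h2, key9.mp h6⟩
  · rintro ⟨⟨⟨h1, h3⟩, h5⟩, h2, h6⟩
    exact ⟨h1, h2, key3.mpr h3, hC5, key8.mpr h5, key9.mpr h6⟩
end

section
/- Let Θ > 0 and θ₁ satisfy −π/2 < θ₁ − Θ/2 < θ₁ + Θ/2 < π/2, let δ_t ≥ 0, z_max > 0, v_max ≥ 0, and suppose the master UAV is placed at q₁ = (x_t − z₁·tan θ₁, z₁) with 0 < z₁ ≤ z_max and the velocities satisfy 0 ≤ v[n] ≤ v_max for all n. Then the InSAR coverage is bounded as C_N ≤ z_max·(tan(θ₁ + Θ/2) − tan(θ₁ − Θ/2))·(N − 1)·v_max·δ_t, i.e. C_N ≤ (S_far(q_max) − S_near(q_max))·(N−1)·v_max·δ_t with q_max = (x_t − z_max·tan θ₁, z_max). -/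
open Real Finset

/-- With the master UAV placed under constraint C2 at altitude
z₁ ≤ z_max and velocities bounded by v_max, the InSAR coverage is bounded by
(S_far(q_max) − S_near(q_max))·(N−1)·v_max·δ_t
  = z_max·(tan(θ₁+Θ/2) − tan(θ₁−Θ/2))·(N−1)·v_max·δ_t. -/
theorem coverage_global_upper_bound
    (Θ θ₁ x_t δt z_max v_max z₁ Sfar₂ Snear₂ : ℝ) (N : ℕ) (v : ℕ → ℝ)
    (hΘ : 0 < Θ) (h₁ : -(π / 2) < θ₁ - Θ / 2) (h₂ : θ₁ + Θ / 2 < π / 2)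
    (hδt : 0 ≤ δt) (hzmax : 0 < z_max) (hvmax : 0 ≤ v_max)
    (hz₁ : 0 < z₁) (hz₁max : z₁ ≤ z_max)
    (hv : ∀ n, 0 ≤ v n ∧ v n ≤ v_max) :
    ∑ n ∈ Finset.range (N - 1),
        max 0
          (min ((x_t - z₁ * Real.tan θ₁) + z₁ * Real.tan (θ₁ + Θ / 2)) Sfar₂ -
            max ((x_t - z₁ * Real.tan θ₁) + z₁ * Real.tan (θ₁ - Θ / 2)) Snear₂)
          * v n * δt ≤
      z_max * (Real.tan (θ₁ + Θ / 2) - Real.tan (θ₁ - Θ / 2)) *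
        ((N - 1 : ℕ) : ℝ) * v_max * δt := by
  have htan : Real.tan (θ₁ - Θ / 2) < Real.tan (θ₁ + Θ / 2) := by
    exact Real.tan_lt_tan_of_lt_of_lt_pi_div_two h₁ h₂ (by linarith)
  have hK : 0 ≤ z_max * (Real.tan (θ₁ + Θ / 2) - Real.tan (θ₁ - Θ / 2)) := by
    have := htan; nlinarith
  have hterm : ∀ n ∈ Finset.range (N - 1),
      max 0
        (min ((x_t - z₁ * Real.tan θ₁) + z₁ * Real.tan (θ₁ + Θ / 2)) Sfar₂ -
          max ((x_t - z₁ * Real.tan θ₁) + z₁ * Real.tan (θ₁ - Θ / 2)) Snear₂)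
        * v n * δt ≤
      z_max * (Real.tan (θ₁ + Θ / 2) - Real.tan (θ₁ - Θ / 2)) * v_max * δt := by
    intro n _
    obtain ⟨hv0, hvm⟩ := hv n
    have hS : max 0
        (min ((x_t - z₁ * Real.tan θ₁) + z₁ * Real.tan (θ₁ + Θ / 2)) Sfar₂ -
          max ((x_t - z₁ * Real.tan θ₁) + z₁ * Real.tan (θ₁ - Θ / 2)) Snear₂)
        ≤ z_max * (Real.tan (θ₁ + Θ / 2) - Real.tan (θ₁ - Θ / 2)) := by
      apply max_le hK
      have h1 : min ((x_t - z₁ * Real.tan θ₁) + z₁ * Real.tan (θ₁ + Θ / 2)) Sfar₂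
          ≤ (x_t - z₁ * Real.tan θ₁) + z₁ * Real.tan (θ₁ + Θ / 2) := min_le_left _ _
      have h2 : (x_t - z₁ * Real.tan θ₁) + z₁ * Real.tan (θ₁ - Θ / 2)
          ≤ max ((x_t - z₁ * Real.tan θ₁) + z₁ * Real.tan (θ₁ - Θ / 2)) Snear₂ :=
        le_max_left _ _
      nlinarith
    have h0 : (0:ℝ) ≤ max 0
        (min ((x_t - z₁ * Real.tan θ₁) + z₁ * Real.tan (θ₁ + Θ / 2)) Sfar₂ -
          max ((x_t - z₁ * Real.tan θ₁) + z₁ * Real.tan (θ₁ - Θ / 2)) Snear₂) :=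
      le_max_left _ _
    have := mul_le_mul (mul_le_mul hS hvm hv0 hK) le_rfl hδt
      (by positivity : 0 ≤ z_max * (Real.tan (θ₁ + Θ / 2) - Real.tan (θ₁ - Θ / 2)) * v_max)
    linarith
  calc ∑ n ∈ Finset.range (N - 1), _ ≤ ∑ n ∈ Finset.range (N - 1),
        z_max * (Real.tan (θ₁ + Θ / 2) - Real.tan (θ₁ - Θ / 2)) * v_max * δt :=
        Finset.sum_le_sum hterm
    _ = z_max * (Real.tan (θ₁ + Θ / 2) - Real.tan (θ₁ - Θ / 2)) *
        ((N - 1 : ℕ) : ℝ) * v_max * δt := by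
        rw [Finset.sum_const, Finset.card_range]; push_cast; ring
end
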